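/- Fix natural numbers k and M with M ≥ 1. For a finite set Γ of anti-Horn clauses, all with right-hand sides of size at most k, define w(Γ) = ∑_{γ ∈ Γ} (M+1)^{k-|rhs γ|}. Suppose |Γ| ≤ M, δ is a clause with |rhs δ| ≤ k and δ ∉ Γ, and every γ ∈ Γ with rhs δ ⊆ rhs γ satisfies rhs δ ⊊ rhs γ (δ itself is new). Then w((Γ \ {γ ∈ Γ : rhs δ ⊆ rhs γ}) ∪ {δ}) > w(Γ). -/

import Mathlib

abbrev Word := List Bool
abbrev Clause := Word × Finset Word

/-- Weight of a finite set of clauses, relative to parameters k and M. -/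
def weight (k M : ℕ) (Γ : Finset Clause) : ℕ :=
  ∑ γ ∈ Γ, (M + 1) ^ (k - γ.2.card)

theorem weight_increases (k M : ℕ) (hM : 1 ≤ M)
    (Γ : Finset Clause) (hΓk : ∀ γ ∈ Γ, γ.2.card ≤ k)
    (hΓM : Γ.card ≤ M)
    (δ : Clause) (hδk : δ.2.card ≤ k) (hδnew : δ ∉ Γ)
    (hproper : ∀ γ ∈ Γ, δ.2 ⊆ γ.2 → δ.2 ⊂ γ.2) :
    weight k M Γ <
      weight k M ((Γ.filter (fun γ => ¬ δ.2 ⊆ γ.2)) ∪ {δ}) := by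
  classical
  set A := Γ.filter (fun γ => ¬ δ.2 ⊆ γ.2) with hA
  set S := Γ.filter (fun γ => δ.2 ⊆ γ.2) with hS
  have hdisj : Disjoint A {δ} := by
    simp only [Finset.disjoint_singleton_right, hA, Finset.mem_filter]
    exact fun h => hδnew h.1
  have hsplit : weight k M Γ = weight k M A + weight k M S := by
    unfold weight
    rw [hA, hS, ← Finset.sum_filter_add_sum_filter_not Γ (fun γ => ¬ δ.2 ⊆ γ.2)
      (fun γ => (M + 1) ^ (k - γ.2.card))]
    congr 1
    apply Finset.sum_congr _ (fun _ _ => rfl)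
    apply Finset.filter_congr
    intro x _
    simp
  have hnew : weight k M (A ∪ {δ}) = weight k M A + (M + 1) ^ (k - δ.2.card) := by
    unfold weight
    rw [Finset.sum_union hdisj, Finset.sum_singleton]
  rw [hsplit, hnew]
  apply Nat.add_lt_add_left
  -- show weight k M S < (M+1)^(k - δ.2.card)
  rcases S.eq_empty_or_nonempty with hE | hNE
  · rw [hE]
    unfold weight
    simp
  · obtain ⟨γ₀, hγ₀⟩ := hNE
    have hγ₀' := Finset.mem_filter.mp hγ₀
    have hlt : δ.2.card < k := by
      have h1 := Finset.card_lt_card (hproper γ₀ hγ₀'.1 hγ₀'.2)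
      exact lt_of_lt_of_le h1 (hΓk γ₀ hγ₀'.1)
    have hbound : ∀ γ ∈ S, (M + 1) ^ (k - γ.2.card) ≤ (M + 1) ^ (k - δ.2.card - 1) := by
      intro γ hγ
      have hγ' := Finset.mem_filter.mp hγ
      have h1 := Finset.card_lt_card (hproper γ hγ'.1 hγ'.2)
      exact Nat.pow_le_pow_right (Nat.succ_le_succ (Nat.zero_le M)) (by omega)
    calc weight k M S ≤ S.card * (M + 1) ^ (k - δ.2.card - 1) := by
          unfold weight
          exact Finset.sum_le_card_nsmul S _ _ hbound
      _ ≤ M * (M + 1) ^ (k - δ.2.card - 1) := by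
          apply Nat.mul_le_mul_right
          exact le_trans (Finset.card_le_card (Finset.filter_subset _ _)) hΓM
      _ < (M + 1) * (M + 1) ^ (k - δ.2.card - 1) := by
          exact Nat.mul_lt_mul_of_lt_of_le (by omega) le_rfl
            (by positivity)
      _ = (M + 1) ^ (k - δ.2.card) := by
          rw [← pow_succ']
          congr 1
          omega
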